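/- arXiv:2006.03578 — 7 statements merged into one kernel-verified Lean document; each statement's English description precedes it below -/
import Mathlib

section
/- Let G be a (2P_2, \overline{P_2+P_3})-free, C_5-free atom containing an induced 4-cycle on vertices v_1,…,v_4. Then for every i ∈ {1,…,4} (indices modulo 4), the set V_∅ ∪ V_{{i}} ∪ V_{{i+1}} ∪ V_{{i,i+1}} is an independent set of G. -/
open SimpleGraph

/-- The graph `2P₂`: two disjoint edges, on vertex set `Fin 4`. -/
def twoP2 : SimpleGraph (Fin 4) :=
  SimpleGraph.fromRel (fun a b => (a = 0 ∧ b = 1) ∨ (a = 2 ∧ b = 3))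

/-- The graph `P₂ + P₃`: disjoint union of a path on 2 vertices (0-1)
and a path on 3 vertices (2-3-4), on vertex set `Fin 5`. -/
def P2P3 : SimpleGraph (Fin 5) :=
  SimpleGraph.fromRel (fun a b => (a = 0 ∧ b = 1) ∨ (a = 2 ∧ b = 3) ∨ (a = 3 ∧ b = 4))

/-- `G` is `H`-free: `G` contains no induced subgraph isomorphic to `H`. -/
def Free {W V : Type*} (H : SimpleGraph W) (G : SimpleGraph V) : Prop :=
  IsEmpty (H ↪g G)

/-- `G` has no clique cut-set: for every clique `K`, deleting the vertices of `K`
does not disconnect the graph.  A graph with this property is called an atom. -/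
def NoCliqueCutset {V : Type*} (G : SimpleGraph V) : Prop :=
  ∀ K : Set V, G.IsClique K → (G.induce (Kᶜ : Set V)).Preconnected

/-- The 5-cycle `C₅` on vertex set `Fin 5`. -/
def C5 : SimpleGraph (Fin 5) :=
  SimpleGraph.fromRel (fun a b => b = a + 1)

/-- For `S ⊆ Fin 4`, the set of vertices `x` outside the cycle `v 0, …, v 3` whose
neighbourhood on the cycle is exactly `{v i : i ∈ S}`. -/
def vSet {V : Type*} (G : SimpleGraph V) (v : Fin 4 → V) (S : Set (Fin 4)) : Set V :=
  {x | (∀ i, x ≠ v i) ∧ ∀ i, (G.Adj x (v i) ↔ i ∈ S)}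

theorem clm_C4_V0_V1_V2_V12_indep {V : Type*} [Fintype V] (G : SimpleGraph V)
    (hfree1 : _root_.Free twoP2 G) (hfree2 : _root_.Free (P2P3ᶜ) G) (hfree3 : _root_.Free C5 G)
    (hatom : NoCliqueCutset G)
    (v : Fin 4 → V) (hv : Function.Injective v)
    (hC : ∀ i j : Fin 4, G.Adj (v i) (v j) ↔ (j = i + 1 ∨ i = j + 1)) :
    ∀ i : Fin 4,
      ∀ x ∈ vSet G v ∅ ∪ vSet G v {i} ∪ vSet G v {i + 1} ∪ vSet G v {i, i + 1},
      ∀ y ∈ vSet G v ∅ ∪ vSet G v {i} ∪ vSet G v {i + 1} ∪ vSet G v {i, i + 1},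
      x ≠ y → ¬ G.Adj x y := by
  intro i x hx y hy hne hadj
  have key : ∀ j : Fin 4, j + 2 ≠ j ∧ j + 2 ≠ j + 1 ∧ j + 3 ≠ j ∧ j + 3 ≠ j + 1 ∧
      j + 2 ≠ j + 3 ∧ j + 3 = (j + 2) + 1 := by decide
  obtain ⟨k1, k2, k3, k4, k5, k6⟩ := key i
  have hprop : ∀ z, z ∈ vSet G v ∅ ∪ vSet G v {i} ∪ vSet G v {i + 1} ∪ vSet G v {i, i + 1} →
      (∀ j, z ≠ v j) ∧ ¬ G.Adj z (v (i + 2)) ∧ ¬ G.Adj z (v (i + 3)) := by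
    intro z hz
    rcases hz with ((h | h) | h) | h <;>
      exact ⟨h.1, by simp [h.2 (i+2), k1, k2], by simp [h.2 (i+3), k3, k4]⟩
  obtain ⟨hxv, hxa, hxb⟩ := hprop x hx
  obtain ⟨hyv, hya, hyb⟩ := hprop y hy
  have hab : G.Adj (v (i + 2)) (v (i + 3)) := (hC _ _).2 (Or.inl k6)
  have hvne : v (i + 2) ≠ v (i + 3) := fun h => k5 (hv h)
  have hxa' : ¬ G.Adj (v (i + 2)) x := fun h => hxa h.symm
  have hxb' : ¬ G.Adj (v (i + 3)) x := fun h => hxb h.symm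
  have hya' : ¬ G.Adj (v (i + 2)) y := fun h => hya h.symm
  have hyb' : ¬ G.Adj (v (i + 3)) y := fun h => hyb h.symm
  refine hfree1.false ⟨⟨![x, y, v (i + 2), v (i + 3)], ?_⟩, ?_⟩
  · intro a b h
    fin_cases a <;> fin_cases b <;>
      simp only [Fin.isValue, Matrix.cons_val_zero, Matrix.cons_val_one, Matrix.head_cons,
        Matrix.cons_val_two, Matrix.tail_cons, Matrix.cons_val_three, Matrix.head_fin_const] at h ⊢ <;>
      first
        | rfl
        | exact absurd h hne
        | exact absurd h.symm hne
        | exact absurd h hvne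
        | exact absurd h.symm hvne
        | exact absurd h (hxv _)
        | exact absurd h (hyv _)
        | exact absurd h.symm (hxv _)
        | exact absurd h.symm (hyv _)
  · intro a b
    change G.Adj (![x, y, v (i + 2), v (i + 3)] a) (![x, y, v (i + 2), v (i + 3)] b) ↔ twoP2.Adj a b
    fin_cases a <;> fin_cases b <;>
      simp [twoP2, Function.Embedding.coeFn_mk, Matrix.cons_val_zero, Matrix.cons_val_one, hadj, hadj.symm,
        hab, hab.symm, hxa, hxb, hya, hyb, hxa', hxb', hya', hyb', hvne, hvne.symm,
        hne, hne.symm, G.irrefl]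
end

section
/- Let G be a (2P_2, \overline{P_2+P_3})-free, C_5-free atom containing an induced 4-cycle on vertices v_1,…,v_4. Then for every i ∈ {1,…,4} (indices modulo 4), both V_{{i,i+1}} ∪ V_{{i,i+2}} and V_{{i,i+1}} ∪ V_{{i+1,i+3}} are independent sets of G. -/
open SimpleGraph

/-- If `G` is `2P₂`-free, it contains no four vertices `a,b,c,d` with edges `ab`, `cd`
and no other edges between them. -/
lemma no_twoP2 {V : Type*} (G : SimpleGraph V) (h : _root_.Free twoP2 G) {a b c d : V}
    (hab : G.Adj a b) (hcd : G.Adj c d)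
    (hac : ¬G.Adj a c) (had : ¬G.Adj a d) (hbc : ¬G.Adj b c) (hbd : ¬G.Adj b d)
    (nac : a ≠ c) (nad : a ≠ d) (nbc : b ≠ c) (nbd : b ≠ d) : False := by
  have nab : a ≠ b := hab.ne
  have ncd : c ≠ d := hcd.ne
  have nba := nab.symm; have ndc := ncd.symm
  have nca := nac.symm; have nda := nad.symm; have ncb := nbc.symm; have ndb := nbd.symm
  have hca : ¬G.Adj c a := fun h' => hac h'.symm
  have hda : ¬G.Adj d a := fun h' => had h'.symm
  have hcb : ¬G.Adj c b := fun h' => hbc h'.symm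
  have hdb : ¬G.Adj d b := fun h' => hbd h'.symm
  apply h.false
  refine ⟨⟨![a,b,c,d], ?_⟩, ?_⟩
  · intro s t hst
    fin_cases s <;> fin_cases t <;> simp_all
  · intro s t
    fin_cases s <;> fin_cases t <;>
      simp [twoP2, Matrix.cons_val_zero, Matrix.cons_val_one, Matrix.head_cons] <;>
      first
        | exact G.loopless _
        | exact hab | exact hab.symm | exact hcd | exact hcd.symm
        | exact hac | exact had | exact hbc | exact hbd
        | exact hca | exact hda | exact hcb | exact hdb

/-- If `G` is `(P₂+P₃)ᶜ`-free, it contains no five vertices `a,b,c,d,e` whose only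
non-adjacent pairs are `ab`, `cd`, `de`. -/
lemma no_barP2P3 {V : Type*} (G : SimpleGraph V) (h : _root_.Free (P2P3ᶜ) G) {a b c d e : V}
    (hab : ¬G.Adj a b) (hcd : ¬G.Adj c d) (hde : ¬G.Adj d e)
    (hac : G.Adj a c) (had : G.Adj a d) (hae : G.Adj a e)
    (hbc : G.Adj b c) (hbd : G.Adj b d) (hbe : G.Adj b e)
    (hce : G.Adj c e)
    (nab : a ≠ b) (ncd : c ≠ d) (nde : d ≠ e) : False := by
  have nac : a ≠ c := hac.ne
  have nad : a ≠ d := had.ne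
  have nae : a ≠ e := hae.ne
  have nbc : b ≠ c := hbc.ne
  have nbd : b ≠ d := hbd.ne
  have nbe : b ≠ e := hbe.ne
  have nce : c ≠ e := hce.ne
  have nba := nab.symm; have ndc := ncd.symm; have ned := nde.symm
  have nca := nac.symm; have nda := nad.symm; have nea := nae.symm
  have ncb := nbc.symm; have ndb := nbd.symm; have neb := nbe.symm
  have nec := nce.symm
  have hba : ¬G.Adj b a := fun h' => hab h'.symm
  have hdc : ¬G.Adj d c := fun h' => hcd h'.symm
  have hed : ¬G.Adj e d := fun h' => hde h'.symm
  have hca := hac.symm; have hda := had.symm; have hea := hae.symm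
  have hcb := hbc.symm; have hdb := hbd.symm; have heb := hbe.symm
  have hec := hce.symm
  apply h.false
  refine ⟨⟨![a,b,c,d,e], ?_⟩, ?_⟩
  · intro s t hst
    fin_cases s <;> fin_cases t <;> simp_all
  · intro s t
    fin_cases s <;> fin_cases t <;>
      simp [P2P3, compl_adj, Matrix.cons_val_zero, Matrix.cons_val_one, Matrix.head_cons] <;>
      first
        | exact G.loopless _
        | exact hac | exact had | exact hae | exact hbc | exact hbd | exact hbe | exact hce
        | exact hca | exact hda | exact hea | exact hcb | exact hdb | exact heb | exact hec
        | exact fun h' => hab h' | exact fun h' => hba h'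
        | exact fun h' => hcd h' | exact fun h' => hdc h'
        | exact fun h' => hde h' | exact fun h' => hed h'

private lemma e12' : ∀ i : Fin 4, i + 2 = i + 1 + 1 := by decide
private lemma e23' : ∀ i : Fin 4, i + 3 = i + 2 + 1 := by decide
private lemma e30' : ∀ i : Fin 4, i = i + 3 + 1 := by decide
private lemma n02' : ∀ i : Fin 4, ¬(i + 2 = i + 1 ∨ i = i + 2 + 1) := by decide
private lemma n13' : ∀ i : Fin 4, ¬(i + 3 = i + 1 + 1 ∨ i + 1 = i + 3 + 1) := by decide
private lemma nA2' : ∀ i : Fin 4, ¬(i + 2 = i ∨ i + 2 = i + 1) := by decide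
private lemma nA3' : ∀ i : Fin 4, ¬(i + 3 = i ∨ i + 3 = i + 1) := by decide
private lemma nB1' : ∀ i : Fin 4, ¬(i + 1 = i ∨ i + 1 = i + 2) := by decide
private lemma nC0' : ∀ i : Fin 4, ¬(i = i + 1 ∨ i = i + 3) := by decide
private lemma d02' : ∀ i : Fin 4, i ≠ i + 2 := by decide
private lemma d13' : ∀ i : Fin 4, i + 1 ≠ i + 3 := by decide

theorem clm_C4_V12_V13_indep {V : Type*} [Fintype V] (G : SimpleGraph V)
    (hfree1 : _root_.Free twoP2 G) (hfree2 : _root_.Free (P2P3ᶜ) G) (hfree3 : _root_.Free C5 G)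
    (hatom : NoCliqueCutset G)
    (v : Fin 4 → V) (hv : Function.Injective v)
    (hC : ∀ i j : Fin 4, G.Adj (v i) (v j) ↔ (j = i + 1 ∨ i = j + 1)) :
    ∀ i : Fin 4,
      (∀ x ∈ vSet G v {i, i + 1} ∪ vSet G v {i, i + 2},
        ∀ y ∈ vSet G v {i, i + 1} ∪ vSet G v {i, i + 2}, x ≠ y → ¬ G.Adj x y) ∧
      (∀ x ∈ vSet G v {i, i + 1} ∪ vSet G v {i + 1, i + 3},
        ∀ y ∈ vSet G v {i, i + 1} ∪ vSet G v {i + 1, i + 3}, x ≠ y → ¬ G.Adj x y) := by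
  intro i
  have adj01 : G.Adj (v i) (v (i+1)) := (hC i (i+1)).mpr (Or.inl rfl)
  have adj12 : G.Adj (v (i+1)) (v (i+2)) := (hC (i+1) (i+2)).mpr (Or.inl (e12' i))
  have adj23 : G.Adj (v (i+2)) (v (i+3)) := (hC (i+2) (i+3)).mpr (Or.inl (e23' i))
  have adj30 : G.Adj (v (i+3)) (v i) := (hC (i+3) i).mpr (Or.inl (e30' i))
  have na02 : ¬ G.Adj (v i) (v (i+2)) := fun h => n02' i ((hC i (i+2)).mp h)
  have na13 : ¬ G.Adj (v (i+1)) (v (i+3)) := fun h => n13' i ((hC (i+1) (i+3)).mp h)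
  constructor
  · intro x hx y hy hne hadj
    simp only [vSet, Set.mem_union, Set.mem_setOf_eq, Set.mem_insert_iff,
      Set.mem_singleton_iff] at hx hy
    rcases hx with ⟨hx1, hx2⟩ | ⟨hx1, hx2⟩ <;> rcases hy with ⟨hy1, hy2⟩ | ⟨hy1, hy2⟩
    · -- x, y ∈ V_{i,i+1}
      exact no_twoP2 G hfree1 hadj adj23
        (fun h => nA2' i ((hx2 _).mp h)) (fun h => nA3' i ((hx2 _).mp h))
        (fun h => nA2' i ((hy2 _).mp h)) (fun h => nA3' i ((hy2 _).mp h))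
        (hx1 _) (hx1 _) (hy1 _) (hy1 _)
    · -- x ∈ V_{i,i+1}, y ∈ V_{i,i+2}
      exact no_barP2P3 G hfree2
        (a := y) (b := v (i+1)) (c := x) (d := v (i+2)) (e := v i)
        (fun h => nB1' i ((hy2 _).mp h)) (fun h => nA2' i ((hx2 _).mp h))
        (fun h => na02 h.symm)
        hadj.symm ((hy2 _).mpr (Or.inr rfl)) ((hy2 _).mpr (Or.inl rfl))
        (((hx2 _).mpr (Or.inr rfl)).symm) adj12 adj01.symm
        ((hx2 _).mpr (Or.inl rfl))
        (hy1 _) (hx1 _) (fun h => d02' i (hv h.symm))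
    · -- x ∈ V_{i,i+2}, y ∈ V_{i,i+1}
      exact no_barP2P3 G hfree2
        (a := x) (b := v (i+1)) (c := y) (d := v (i+2)) (e := v i)
        (fun h => nB1' i ((hx2 _).mp h)) (fun h => nA2' i ((hy2 _).mp h))
        (fun h => na02 h.symm)
        hadj ((hx2 _).mpr (Or.inr rfl)) ((hx2 _).mpr (Or.inl rfl))
        (((hy2 _).mpr (Or.inr rfl)).symm) adj12 adj01.symm
        ((hy2 _).mpr (Or.inl rfl))
        (hx1 _) (hy1 _) (fun h => d02' i (hv h.symm))
    · -- x, y ∈ V_{i,i+2}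
      exact no_barP2P3 G hfree2
        (a := v i) (b := v (i+2)) (c := x) (d := v (i+1)) (e := y)
        na02 (fun h => nB1' i ((hx2 _).mp h)) (fun h => nB1' i ((hy2 _).mp h.symm))
        (((hx2 _).mpr (Or.inl rfl)).symm) adj01 (((hy2 _).mpr (Or.inl rfl)).symm)
        (((hx2 _).mpr (Or.inr rfl)).symm) adj12.symm (((hy2 _).mpr (Or.inr rfl)).symm)
        hadj
        (fun h => d02' i (hv h)) (hx1 _) ((hy1 _).symm)
  · intro x hx y hy hne hadj
    simp only [vSet, Set.mem_union, Set.mem_setOf_eq, Set.mem_insert_iff,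
      Set.mem_singleton_iff] at hx hy
    rcases hx with ⟨hx1, hx2⟩ | ⟨hx1, hx2⟩ <;> rcases hy with ⟨hy1, hy2⟩ | ⟨hy1, hy2⟩
    · -- x, y ∈ V_{i,i+1}
      exact no_twoP2 G hfree1 hadj adj23
        (fun h => nA2' i ((hx2 _).mp h)) (fun h => nA3' i ((hx2 _).mp h))
        (fun h => nA2' i ((hy2 _).mp h)) (fun h => nA3' i ((hy2 _).mp h))
        (hx1 _) (hx1 _) (hy1 _) (hy1 _)
    · -- x ∈ V_{i,i+1}, y ∈ V_{i+1,i+3}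
      exact no_barP2P3 G hfree2
        (a := y) (b := v i) (c := x) (d := v (i+3)) (e := v (i+1))
        (fun h => nC0' i ((hy2 _).mp h)) (fun h => nA3' i ((hx2 _).mp h))
        (fun h => na13 h.symm)
        hadj.symm ((hy2 _).mpr (Or.inr rfl)) ((hy2 _).mpr (Or.inl rfl))
        (((hx2 _).mpr (Or.inl rfl)).symm) adj30.symm adj01
        ((hx2 _).mpr (Or.inr rfl))
        (hy1 _) (hx1 _) (fun h => d13' i (hv h.symm))
    · -- x ∈ V_{i+1,i+3}, y ∈ V_{i,i+1}
      exact no_barP2P3 G hfree2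
        (a := x) (b := v i) (c := y) (d := v (i+3)) (e := v (i+1))
        (fun h => nC0' i ((hx2 _).mp h)) (fun h => nA3' i ((hy2 _).mp h))
        (fun h => na13 h.symm)
        hadj ((hx2 _).mpr (Or.inr rfl)) ((hx2 _).mpr (Or.inl rfl))
        (((hy2 _).mpr (Or.inl rfl)).symm) adj30.symm adj01
        ((hy2 _).mpr (Or.inr rfl))
        (hx1 _) (hy1 _) (fun h => d13' i (hv h.symm))
    · -- x, y ∈ V_{i+1,i+3}
      exact no_barP2P3 G hfree2
        (a := v (i+1)) (b := v (i+3)) (c := x) (d := v i) (e := y)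
        na13 (fun h => nC0' i ((hx2 _).mp h)) (fun h => nC0' i ((hy2 _).mp h.symm))
        (((hx2 _).mpr (Or.inl rfl)).symm) adj01.symm (((hy2 _).mpr (Or.inl rfl)).symm)
        (((hx2 _).mpr (Or.inr rfl)).symm) adj30 (((hy2 _).mpr (Or.inr rfl)).symm)
        hadj
        (fun h => d13' i (hv h)) (hx1 _) ((hy1 _).symm)
end

section
/- Let G be a (2P_2, \overline{P_2+P_3})-free, C_5-free atom containing an induced 4-cycle on vertices v_1,…,v_4. Then the subgraph of G induced by V_{{1,2,3,4}} is (P_1+P_2)-free; that is, there are no three distinct vertices x, y, y' ∈ V_{{1,2,3,4}} such that y is adjacent to y' and x is adjacent to neither y nor y'. -/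
open SimpleGraph

lemma pk_lemma : ∀ a b : Fin 5, (P2P3ᶜ).Adj a b ↔
    (a ≠ b ∧ ¬ ((a = 0 ∧ b = 1) ∨ (b = 0 ∧ a = 1) ∨ (a = 2 ∧ b = 3) ∨
      (b = 2 ∧ a = 3) ∨ (a = 3 ∧ b = 4) ∨ (b = 3 ∧ a = 4))) := by
  intro a b
  simp only [compl_adj, P2P3, fromRel_adj, ne_eq]
  fin_cases a <;> fin_cases b <;> decide

theorem clm_C4_V1234_P1P2_free {V : Type*} [Fintype V] (G : SimpleGraph V)
    (hfree1 : _root_.Free twoP2 G) (hfree2 : _root_.Free (P2P3ᶜ) G) (hfree3 : _root_.Free C5 G)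
    (hatom : NoCliqueCutset G)
    (v : Fin 4 → V) (hv : Function.Injective v)
    (hC : ∀ i j : Fin 4, G.Adj (v i) (v j) ↔ (j = i + 1 ∨ i = j + 1)) :
    ¬ ∃ x y y' : V, x ∈ vSet G v (Set.univ : Set (Fin 4)) ∧
      y ∈ vSet G v (Set.univ : Set (Fin 4)) ∧ y' ∈ vSet G v (Set.univ : Set (Fin 4)) ∧
      x ≠ y ∧ x ≠ y' ∧ y ≠ y' ∧ G.Adj y y' ∧ ¬ G.Adj x y ∧ ¬ G.Adj x y' := by
  rintro ⟨x, y, y', ⟨hxv, hxa⟩, ⟨hyv, hya⟩, ⟨hy'v, hy'a⟩, hxy, hxy', hyy', hadj, hnxy, hnxy'⟩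
  have hax : ∀ i, G.Adj x (v i) := fun i => (hxa i).2 (Set.mem_univ i)
  have hay : ∀ i, G.Adj y (v i) := fun i => (hya i).2 (Set.mem_univ i)
  have hay' : ∀ i, G.Adj y' (v i) := fun i => (hy'a i).2 (Set.mem_univ i)
  have h02 : ¬ G.Adj (v 0) (v 2) := by
    rw [hC]; decide
  let f : Fin 5 → V := ![v 0, v 2, y, x, y']
  have hinj : Function.Injective f := by
    intro a b hab
    fin_cases a <;> fin_cases b <;>
      simp_all [f, hv.eq_iff] <;>
      first
        | exact hyv 0 hab.symm | exact hxv 0 hab.symm | exact hy'v 0 hab.symm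
        | exact hyv 2 hab.symm | exact hxv 2 hab.symm | exact hy'v 2 hab.symm
        | exact hyv 0 hab | exact hxv 0 hab | exact hy'v 0 hab
        | exact hyv 2 hab | exact hxv 2 hab | exact hy'v 2 hab
        | exact hxy hab.symm | exact hxy' hab.symm | exact hyy' hab
        | exact hxy' hab
  have pk := pk_lemma
  have pkT : ∀ a b : Fin 5, (a ≠ b ∧ ¬ ((a = 0 ∧ b = 1) ∨ (b = 0 ∧ a = 1) ∨ (a = 2 ∧ b = 3) ∨
        (b = 2 ∧ a = 3) ∨ (a = 3 ∧ b = 4) ∨ (b = 3 ∧ a = 4))) → (P2P3ᶜ).Adj a b :=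
    fun a b h => (pk a b).2 h
  have pkF : ∀ a b : Fin 5, ¬ (a ≠ b ∧ ¬ ((a = 0 ∧ b = 1) ∨ (b = 0 ∧ a = 1) ∨ (a = 2 ∧ b = 3) ∨
        (b = 2 ∧ a = 3) ∨ (a = 3 ∧ b = 4) ∨ (b = 3 ∧ a = 4))) → ¬ (P2P3ᶜ).Adj a b :=
    fun a b h h' => h ((pk a b).1 h')
  refine hfree2.elim ⟨⟨f, hinj⟩, ?_⟩
  intro a b
  fin_cases a <;> fin_cases b <;>
    first
      | exact iff_of_false (G.irrefl) (pkF _ _ (by decide))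
      | exact iff_of_false h02 (pkF _ _ (by decide))
      | exact iff_of_false (fun h => h02 h.symm) (pkF _ _ (by decide))
      | exact iff_of_false hnxy (pkF _ _ (by decide))
      | exact iff_of_false (fun h => hnxy h.symm) (pkF _ _ (by decide))
      | exact iff_of_false hnxy' (pkF _ _ (by decide))
      | exact iff_of_false (fun h => hnxy' h.symm) (pkF _ _ (by decide))
      | exact iff_of_true (hax 0) (pkT _ _ (by decide))
      | exact iff_of_true (hax 2) (pkT _ _ (by decide))
      | exact iff_of_true ((hax 0).symm) (pkT _ _ (by decide))
      | exact iff_of_true ((hax 2).symm) (pkT _ _ (by decide))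
      | exact iff_of_true (hay 0) (pkT _ _ (by decide))
      | exact iff_of_true (hay 2) (pkT _ _ (by decide))
      | exact iff_of_true ((hay 0).symm) (pkT _ _ (by decide))
      | exact iff_of_true ((hay 2).symm) (pkT _ _ (by decide))
      | exact iff_of_true (hay' 0) (pkT _ _ (by decide))
      | exact iff_of_true (hay' 2) (pkT _ _ (by decide))
      | exact iff_of_true ((hay' 0).symm) (pkT _ _ (by decide))
      | exact iff_of_true ((hay' 2).symm) (pkT _ _ (by decide))
      | exact iff_of_true hadj (pkT _ _ (by decide))
      | exact iff_of_true (hadj.symm) (pkT _ _ (by decide))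
end

section
/- Let G be a (2P_2, \overline{P_2+P_3})-free, C_5-free atom containing an induced 4-cycle on vertices v_1,…,v_4. Then for i ∈ {1,2}, every vertex of V_{{i,i+2}} is adjacent to every vertex of V_{{1,2,3,4}}. -/
open SimpleGraph

theorem clm_C4_V13_V1234_complete {V : Type*} [Fintype V] (G : SimpleGraph V)
    (hfree1 : _root_.Free twoP2 G) (hfree2 : _root_.Free (P2P3ᶜ) G) (hfree3 : _root_.Free C5 G)
    (hatom : NoCliqueCutset G)
    (v : Fin 4 → V) (hv : Function.Injective v)
    (hC : ∀ i j : Fin 4, G.Adj (v i) (v j) ↔ (j = i + 1 ∨ i = j + 1)) :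
    ∀ i : Fin 4, ∀ x ∈ vSet G v {i, i + 2},
      ∀ y ∈ vSet G v (Set.univ : Set (Fin 4)), G.Adj x y := by

  intro i x hx y hy
  obtain ⟨hxv, hxadj⟩ := hx
  obtain ⟨hyv, hyadj⟩ := hy
  by_contra hxy
  have hne : ∀ (a b : Fin 4), a ≠ b → v a ≠ v b := fun a b h hh => h (hv hh)
  have hxvi : G.Adj x (v i) := (hxadj i).mpr (Or.inl rfl)
  have hxvi2 : G.Adj x (v (i+2)) := (hxadj (i+2)).mpr (Or.inr rfl)
  have hxv1 : ¬ G.Adj x (v (i+1)) := fun h => by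
    have h' := (hxadj (i+1)).mp h
    simp only [Set.mem_insert_iff, Set.mem_singleton_iff] at h'
    omega
  have hy' : ∀ j, G.Adj y (v j) := fun j => (hyadj j).mpr (Set.mem_univ j)
  have hxy' : x ≠ y := fun h => hxv1 (h ▸ hy' (i+1))
  have e01 : G.Adj (v i) (v (i+1)) := (hC i (i+1)).mpr (Or.inl rfl)
  have e12 : G.Adj (v (i+1)) (v (i+2)) := (hC (i+1) (i+2)).mpr (Or.inl (by omega))
  have e02 : ¬ G.Adj (v i) (v (i+2)) := fun h => by
    rcases (hC i (i+2)).mp h with h' | h' <;> omega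
  have d1 : v i ≠ v (i+2) := hne _ _ (by omega)
  have d2 : v i ≠ v (i+1) := hne _ _ (by omega)
  have d3 : v (i+2) ≠ v (i+1) := hne _ _ (by omega)
  refine hfree2.elim ⟨⟨![v i, v (i+2), y, x, v (i+1)], ?_⟩, ?_⟩
  · intro a b h
    fin_cases a <;> fin_cases b <;>
      simp only [Matrix.cons_val_zero, Matrix.cons_val_one, Matrix.head_cons,
        Fin.isValue, Matrix.cons_val_fin_one, Matrix.cons_val_succ] at h <;>
      first
        | rfl
        | exact absurd h (hxv _)
        | exact absurd h.symm (hxv _)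
        | exact absurd h (hyv _)
        | exact absurd h.symm (hyv _)
        | exact absurd h hxy'
        | exact absurd h.symm hxy'
        | exact absurd h d1 | exact absurd h.symm d1
        | exact absurd h d2 | exact absurd h.symm d2
        | exact absurd h d3 | exact absurd h.symm d3
  · intro a b
    have hxy2 : ¬ G.Adj y x := fun h => hxy h.symm
    dsimp only [DFunLike.coe]
    fin_cases a <;> fin_cases b <;>
      simp [P2P3, compl_adj, fromRel_adj, G.adj_comm, hxvi, hxvi2, hxv1, hy', hxy, hxy2,
        e01, e12, e02, hxy'] <;>
      first
        | exact fun h => hxv1 h.symm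
        | exact fun h => e02 h.symm
        | exact hxvi.symm
        | exact hxvi2.symm
        | exact e01.symm
        | exact e12.symm
        | exact (hy' _).symm
        | decide
end

section
/- Let G be a (2P_2, \overline{P_2+P_3})-free, C_5-free atom containing an induced 4-cycle on vertices v_1,…,v_4. Then for every i ∈ {1,…,4} (indices modulo 4), at least one of the sets V_{{i-1}} ∪ V_{{i-1,i}} and V_{{i,i+1}} ∪ V_{{i+1}} is empty. -/
open SimpleGraph

/-- For `S ⊆ Fin 4`, the set of vertices `x` outside the cycle `v 0, …, v 3` whose
neighbourhood on the cycle is exactly `{v i : i ∈ S}`. -/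
lemma key {V : Type*} (G : SimpleGraph V)
    (hfree1 : _root_.Free twoP2 G) (hfree3 : _root_.Free C5 G)
    (a c d x y : V)
    (hac : a ≠ c) (had : a ≠ d) (hcd : c ≠ d)
    (hxa : x ≠ a) (hxc : x ≠ c) (hxd : x ≠ d)
    (hya : y ≠ a) (hyc : y ≠ c) (hyd : y ≠ d) (hxy : x ≠ y)
    (axa : G.Adj x a) (nxc : ¬G.Adj x c) (nxd : ¬G.Adj x d)
    (ayc : G.Adj y c) (nya : ¬G.Adj y a) (nyd : ¬G.Adj y d)
    (aad : G.Adj a d) (acd : G.Adj c d) (nac : ¬G.Adj a c) : False := by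
  by_cases h : G.Adj x y
  · -- C5 on x a d c y
    apply hfree3.false
    refine ⟨⟨![x, a, d, c, y], ?_⟩, ?_⟩
    · intro p q
      fin_cases p <;> fin_cases q <;>
        simp_all [Matrix.cons_val_zero, Matrix.cons_val_one] <;> tauto
    · intro p q
      have sxa := axa.symm; have syc := ayc.symm; have sad := aad.symm
      have scd := acd.symm; have sh := h.symm
      have nca : ¬G.Adj c a := fun hh => nac hh.symm
      have ncx : ¬G.Adj c x := fun hh => nxc hh.symm
      have ndx : ¬G.Adj d x := fun hh => nxd hh.symm
      have nay : ¬G.Adj a y := fun hh => nya hh.symm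
      have ndy : ¬G.Adj d y := fun hh => nyd hh.symm
      change G.Adj (![x, a, d, c, y] p) (![x, a, d, c, y] q) ↔ _
      fin_cases p <;> fin_cases q <;>
        simp_all [C5, SimpleGraph.fromRel_adj]
  · -- 2P2 on xa, yc
    apply hfree1.false
    refine ⟨⟨![x, a, y, c], ?_⟩, ?_⟩
    · intro p q
      fin_cases p <;> fin_cases q <;>
        simp_all [Matrix.cons_val_zero, Matrix.cons_val_one] <;> tauto
    · intro p q
      have sxa := axa.symm; have syc := ayc.symm
      have nca : ¬G.Adj c a := fun hh => nac hh.symm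
      have nay : ¬G.Adj a y := fun hh => nya hh.symm
      have nyx : ¬G.Adj y x := fun hh => h hh.symm
      have ncx : ¬G.Adj c x := fun hh => nxc hh.symm
      change G.Adj (![x, a, y, c] p) (![x, a, y, c] q) ↔ _
      fin_cases p <;> fin_cases q <;>
        simp_all [twoP2, SimpleGraph.fromRel_adj]

theorem clm_C4_V1_V12_or_V23_V3_empty {V : Type*} [Fintype V] (G : SimpleGraph V)
    (hfree1 : _root_.Free twoP2 G) (hfree2 : _root_.Free (P2P3ᶜ) G) (hfree3 : _root_.Free C5 G)
    (hatom : NoCliqueCutset G)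
    (v : Fin 4 → V) (hv : Function.Injective v)
    (hC : ∀ i j : Fin 4, G.Adj (v i) (v j) ↔ (j = i + 1 ∨ i = j + 1)) :
    ∀ i : Fin 4,
      vSet G v {i - 1} ∪ vSet G v {i - 1, i} = ∅ ∨
      vSet G v {i, i + 1} ∪ vSet G v {i + 1} = ∅ := by
  intro i
  by_contra hcon
  push_neg at hcon
  obtain ⟨h1, h2⟩ := hcon
  obtain ⟨x, hx⟩ := h1
  obtain ⟨y, hy⟩ := h2
  have e1 : ∀ j : Fin 4, j + 1 ≠ j - 1 := by decide
  have e2 : ∀ j : Fin 4, j + 1 ≠ j := by decide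
  have e3 : ∀ j : Fin 4, j + 2 ≠ j - 1 := by decide
  have e4 : ∀ j : Fin 4, j + 2 ≠ j := by decide
  have e5 : ∀ j : Fin 4, j + 2 ≠ j + 1 := by decide
  have e6 : ∀ j : Fin 4, j - 1 ≠ j := by decide
  have e7 : ∀ j : Fin 4, j - 1 ≠ j + 1 := by decide
  have e8 : ∀ j : Fin 4, j + 2 + 1 = j - 1 := by decide
  have e9 : ∀ j : Fin 4, j + 1 + 1 = j + 2 := by decide
  have e10 : ∀ j : Fin 4, ¬ (j + 1 = j - 1 + 1 ∨ j - 1 = j + 1 + 1) := by decide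
  -- facts about x
  have hxfacts : (∀ j, x ≠ v j) ∧ G.Adj x (v (i-1)) ∧
      ¬G.Adj x (v (i+1)) ∧ ¬G.Adj x (v (i+2)) := by
    rcases hx with hx | hx <;> obtain ⟨hne, hadj⟩ := hx
    · exact ⟨hne, (hadj _).mpr rfl,
        fun h => e1 i ((hadj _).mp h), fun h => e3 i ((hadj _).mp h)⟩
    · refine ⟨hne, (hadj _).mpr (Or.inl rfl), fun h => ?_, fun h => ?_⟩
      · rcases (hadj _).mp h with h' | h'
        exacts [e1 i h', e2 i h']
      · rcases (hadj _).mp h with h' | h'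
        exacts [e3 i h', e4 i h']
  -- facts about y
  have hyfacts : (∀ j, y ≠ v j) ∧ G.Adj y (v (i+1)) ∧
      ¬G.Adj y (v (i-1)) ∧ ¬G.Adj y (v (i+2)) := by
    rcases hy with hy | hy <;> obtain ⟨hne, hadj⟩ := hy
    · refine ⟨hne, (hadj _).mpr (Or.inr rfl), fun h => ?_, fun h => ?_⟩
      · rcases (hadj _).mp h with h' | h'
        exacts [e6 i h', e7 i h']
      · rcases (hadj _).mp h with h' | h'
        exacts [e4 i h', e5 i h']
    · exact ⟨hne, (hadj _).mpr rfl,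
        fun h => e7 i ((hadj _).mp h),
        fun h => e5 i ((hadj _).mp h)⟩
  obtain ⟨hxne, axa, nxc, nxd⟩ := hxfacts
  obtain ⟨hyne, ayc, nya, nyd⟩ := hyfacts
  have hxy : x ≠ y := fun h => nxc (by rw [h]; exact ayc)
  exact key G hfree1 hfree3 (v (i-1)) (v (i+1)) (v (i+2)) x y
    (fun h => e7 i (hv h)) (fun h => e3 i (hv h).symm) (fun h => e5 i (hv h).symm)
    (hxne _) (hxne _) (hxne _) (hyne _) (hyne _) (hyne _) hxy
    axa nxc nxd ayc nya nyd
    ((hC _ _).mpr (Or.inr (e8 i).symm))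
    ((hC _ _).mpr (Or.inl (e9 i).symm))
    (fun h => e10 i ((hC _ _).mp h))
end

section
/- Let G be a (2P_2, \overline{P_2+P_3})-free, C_5-free atom containing an induced 4-cycle on vertices v_1,…,v_4. If x ∈ V_∅, then either x has at least two neighbours in V_{{1,3}} and no neighbour in V_{{2,4}}, or x has at least two neighbours in V_{{2,4}} and no neighbour in V_{{1,3}}; furthermore, in either case x is adjacent to every vertex of V_{{1,2,3,4}}. -/
open SimpleGraph

section helpers
variable {V : Type*} {G : SimpleGraph V}

lemma no2P2 (hfree : _root_.Free twoP2 G) {a b c d : V}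
    (hab : G.Adj a b) (hcd : G.Adj c d)
    (hac : ¬ G.Adj a c) (had : ¬ G.Adj a d) (hbc : ¬ G.Adj b c) (hbd : ¬ G.Adj b d)
    (nac : a ≠ c) (nad : a ≠ d) (nbc : b ≠ c) (nbd : b ≠ d) : False := by
  have nab : a ≠ b := hab.ne
  have ncd : c ≠ d := hcd.ne
  refine hfree.false ⟨⟨![a,b,c,d], ?_⟩, ?_⟩
  · intro i j hij
    fin_cases i <;> fin_cases j <;> simp_all <;> simp_all [eq_comm]
  · intro i j
    change G.Adj (![a,b,c,d] i) (![a,b,c,d] j) ↔ _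
    fin_cases i <;> fin_cases j <;>
      simp_all [twoP2, Function.Embedding.coeFn_mk, SimpleGraph.fromRel_adj, G.adj_comm]

/-- Five vertices whose complement-edges are exactly a-b, c-d, d-e give an induced P2P3ᶜ. -/
lemma noCoP2P3 (hfree : _root_.Free (P2P3ᶜ) G) {a b c d e : V}
    (hac : G.Adj a c) (had : G.Adj a d) (hae : G.Adj a e)
    (hbc : G.Adj b c) (hbd : G.Adj b d) (hbe : G.Adj b e) (hce : G.Adj c e)
    (nab : ¬ G.Adj a b) (ncd : ¬ G.Adj c d) (nde : ¬ G.Adj d e)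
    (dab : a ≠ b) (dcd : c ≠ d) (dde : d ≠ e) : False := by
  have dac : a ≠ c := hac.ne
  have dad : a ≠ d := had.ne
  have dae : a ≠ e := hae.ne
  have dbc : b ≠ c := hbc.ne
  have dbd : b ≠ d := hbd.ne
  have dbe : b ≠ e := hbe.ne
  have dce : c ≠ e := hce.ne
  refine hfree.false ⟨⟨![a,b,c,d,e], ?_⟩, ?_⟩
  · intro i j hij
    fin_cases i <;> fin_cases j <;> simp_all <;> simp_all [eq_comm]
  · intro i j
    change G.Adj (![a,b,c,d,e] i) (![a,b,c,d,e] j) ↔ _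
    fin_cases i <;> fin_cases j <;>
      simp_all [P2P3, Function.Embedding.coeFn_mk, SimpleGraph.compl_adj, SimpleGraph.fromRel_adj, G.adj_comm]

lemma noC5 (hfree : _root_.Free C5 G) {a b c d e : V}
    (hab : G.Adj a b) (hbc : G.Adj b c) (hcd : G.Adj c d) (hde : G.Adj d e)
    (hea : G.Adj e a)
    (nac : ¬ G.Adj a c) (nad : ¬ G.Adj a d) (nbd : ¬ G.Adj b d) (nbe : ¬ G.Adj b e)
    (nce : ¬ G.Adj c e)
    (dac : a ≠ c) (dad : a ≠ d) (dbd : b ≠ d) (dbe : b ≠ e) (dce : c ≠ e) : False := by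
  have dab : a ≠ b := hab.ne
  have dbc : b ≠ c := hbc.ne
  have dcd : c ≠ d := hcd.ne
  have dde : d ≠ e := hde.ne
  have dea : e ≠ a := hea.ne
  have hae : G.Adj a e := hea.symm
  refine hfree.false ⟨⟨![a,b,c,d,e], ?_⟩, ?_⟩
  · intro i j hij
    fin_cases i <;> fin_cases j <;> simp_all <;> simp_all [eq_comm]
  · intro i j
    change G.Adj (![a,b,c,d,e] i) (![a,b,c,d,e] j) ↔ _
    fin_cases i <;> fin_cases j <;>
      simp_all [C5, Function.Embedding.coeFn_mk, SimpleGraph.fromRel_adj, G.adj_comm]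

lemma exists_nonadj_pair (hatom : NoCliqueCutset G) {x t : V} (hxt : x ≠ t)
    (htx : ¬ G.Adj x t) :
    ∃ y y', G.Adj x y ∧ G.Adj x y' ∧ y ≠ y' ∧ ¬ G.Adj y y' := by
  by_contra hcon
  push_neg at hcon
  have hclique : G.IsClique {y | G.Adj x y} := by
    intro a ha b hb hab
    exact hcon a b ha hb hab
  have hpre := hatom _ hclique
  have hx : x ∈ {y | G.Adj x y}ᶜ := by simp
  have ht : t ∈ {y | G.Adj x y}ᶜ := by simpa using htx
  obtain ⟨w⟩ := hpre ⟨x, hx⟩ ⟨t, ht⟩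
  have hnil : ¬ w.Nil := SimpleGraph.Walk.not_nil_of_ne (by
    intro h; exact hxt (congrArg Subtype.val h))
  have hadj := w.adj_snd hnil
  have hmem := (w.getVert 1).2
  simp only [Set.mem_compl_iff, Set.mem_setOf_eq] at hmem
  exact hmem (by simpa using hadj)

end helpers

theorem clm_C4_V0_nice_nbhd {V : Type*} [Fintype V] (G : SimpleGraph V)
    (hfree1 : _root_.Free twoP2 G) (hfree2 : _root_.Free (P2P3ᶜ) G) (hfree3 : _root_.Free C5 G)
    (hatom : NoCliqueCutset G)
    (v : Fin 4 → V) (hv : Function.Injective v)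
    (hC : ∀ i j : Fin 4, G.Adj (v i) (v j) ↔ (j = i + 1 ∨ i = j + 1)) :
    ∀ x ∈ vSet G v (∅ : Set (Fin 4)),
      (((∃ y ∈ vSet G v ({0, 2} : Set (Fin 4)), ∃ y' ∈ vSet G v ({0, 2} : Set (Fin 4)),
          y ≠ y' ∧ G.Adj x y ∧ G.Adj x y') ∧
        (∀ z ∈ vSet G v ({1, 3} : Set (Fin 4)), ¬ G.Adj x z)) ∨
       ((∃ y ∈ vSet G v ({1, 3} : Set (Fin 4)), ∃ y' ∈ vSet G v ({1, 3} : Set (Fin 4)),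
          y ≠ y' ∧ G.Adj x y ∧ G.Adj x y') ∧
        (∀ z ∈ vSet G v ({0, 2} : Set (Fin 4)), ¬ G.Adj x z))) ∧
      (∀ w ∈ vSet G v (Set.univ : Set (Fin 4)), G.Adj x w) := by
  intro x hx
  obtain ⟨hxv, hxS⟩ := hx
  have hxadj : ∀ i, ¬ G.Adj x (v i) := fun i h => Set.notMem_empty i ((hxS i).mp h)
  have cadj : ∀ i j : Fin 4, (j = i + 1 ∨ i = j + 1) → G.Adj (v i) (v j) :=
    fun i j h => (hC i j).mpr h
  have cnadj : ∀ i j : Fin 4, ¬(j = i + 1 ∨ i = j + 1) → ¬ G.Adj (v i) (v j) :=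
    fun i j h ha => h ((hC i j).mp ha)
  have a01 : G.Adj (v 0) (v 1) := cadj 0 1 (by decide)
  have a12 : G.Adj (v 1) (v 2) := cadj 1 2 (by decide)
  have a23 : G.Adj (v 2) (v 3) := cadj 2 3 (by decide)
  have a03 : G.Adj (v 0) (v 3) := cadj 0 3 (by decide)
  have a21 : G.Adj (v 2) (v 1) := a12.symm
  have a30 : G.Adj (v 3) (v 0) := a03.symm
  have n02 : ¬ G.Adj (v 0) (v 2) := cnadj 0 2 (by decide)
  have n13 : ¬ G.Adj (v 1) (v 3) := cnadj 1 3 (by decide)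
  have n31 : ¬ G.Adj (v 3) (v 1) := cnadj 3 1 (by decide)
  have n20 : ¬ G.Adj (v 2) (v 0) := cnadj 2 0 (by decide)
  have d02 : v 0 ≠ v 2 := fun h => absurd (hv h) (by decide)
  have d13 : v 1 ≠ v 3 := fun h => absurd (hv h) (by decide)
  have d31 : v 3 ≠ v 1 := d13.symm
  have d20 : v 2 ≠ v 0 := d02.symm
  -- properties of members of the special sets
  have hA : ∀ ⦃y⦄, y ∈ vSet G v ({0,2} : Set (Fin 4)) →
      G.Adj y (v 0) ∧ G.Adj y (v 2) ∧ ¬ G.Adj y (v 1) ∧ ¬ G.Adj y (v 3) := by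
    intro y hy
    exact ⟨(hy.2 0).mpr (by simp), (hy.2 2).mpr (by simp),
      fun h => by simpa using (hy.2 1).mp h, fun h => by simpa using (hy.2 3).mp h⟩
  have hB : ∀ ⦃y⦄, y ∈ vSet G v ({1,3} : Set (Fin 4)) →
      G.Adj y (v 1) ∧ G.Adj y (v 3) ∧ ¬ G.Adj y (v 0) ∧ ¬ G.Adj y (v 2) := by
    intro y hy
    exact ⟨(hy.2 1).mpr (by simp), (hy.2 3).mpr (by simp),
      fun h => by simpa using (hy.2 0).mp h, fun h => by simpa using (hy.2 2).mp h⟩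
  have hU : ∀ ⦃y⦄, y ∈ vSet G v (Set.univ : Set (Fin 4)) → ∀ i, G.Adj y (v i) :=
    fun y hy i => (hy.2 i).mpr (Set.mem_univ i)
  -- classification of neighbours of x
  have classify : ∀ ⦃y⦄, G.Adj x y →
      y ∈ vSet G v ({0,2} : Set (Fin 4)) ∨ y ∈ vSet G v ({1,3} : Set (Fin 4)) ∨
      y ∈ vSet G v (Set.univ : Set (Fin 4)) := by
    intro y hxy
    have hyv : ∀ i, y ≠ v i := fun i h => hxadj i (h ▸ hxy)
    have cover : ∀ i : Fin 4, G.Adj y (v i) ∨ G.Adj y (v (i+1)) := by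
      intro i
      by_contra hcc
      push_neg at hcc
      exact no2P2 hfree1 hxy (cadj i (i+1) (Or.inl rfl))
        (hxadj i) (hxadj (i+1)) hcc.1 hcc.2 (hxv i) (hxv (i+1)) (hyv i) (hyv (i+1))
    have c01 := cover 0
    have c12 := cover 1
    have c23 := cover 2
    have c30 := cover 3
    norm_num at c01 c12 c23 c30
    have k012 : G.Adj y (v 0) → G.Adj y (v 1) → G.Adj y (v 2) → ¬G.Adj y (v 3) → False :=
      fun h0 h1 h2 h3 => noCoP2P3 hfree2 h0.symm a03 a01 h2.symm a23 a21 h1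
        n02 h3 n31 d02 (hyv 3) d31
    have k123 : ¬G.Adj y (v 0) → G.Adj y (v 1) → G.Adj y (v 2) → G.Adj y (v 3) → False :=
      fun h0 h1 h2 h3 => noCoP2P3 hfree2 h1.symm a01.symm a12 h3.symm a30 a23.symm h2
        n13 h0 n02 d13 (hyv 0) d02
    have k230 : G.Adj y (v 0) → ¬G.Adj y (v 1) → G.Adj y (v 2) → G.Adj y (v 3) → False :=
      fun h0 h1 h2 h3 => noCoP2P3 hfree2 h2.symm a21 a23 h0.symm a01 a03 h3
        n20 h1 n13 d20 (hyv 1) d13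
    have k301 : G.Adj y (v 0) → G.Adj y (v 1) → ¬G.Adj y (v 2) → G.Adj y (v 3) → False :=
      fun h0 h1 h2 h3 => noCoP2P3 hfree2 h3.symm a23.symm a30 h1.symm a12 a01.symm h0
        n31 h2 n20 d31 (hyv 2) d20
    have pat : (G.Adj y (v 0) ∧ ¬G.Adj y (v 1) ∧ G.Adj y (v 2) ∧ ¬G.Adj y (v 3)) ∨
        (¬G.Adj y (v 0) ∧ G.Adj y (v 1) ∧ ¬G.Adj y (v 2) ∧ G.Adj y (v 3)) ∨
        (G.Adj y (v 0) ∧ G.Adj y (v 1) ∧ G.Adj y (v 2) ∧ G.Adj y (v 3)) := by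
      by_cases h0 : G.Adj y (v 0) <;> by_cases h1 : G.Adj y (v 1) <;>
        by_cases h2 : G.Adj y (v 2) <;> by_cases h3 : G.Adj y (v 3) <;>
      first
      | exact Or.inl ⟨h0, h1, h2, h3⟩
      | exact Or.inr (Or.inl ⟨h0, h1, h2, h3⟩)
      | exact Or.inr (Or.inr ⟨h0, h1, h2, h3⟩)
      | exact (k012 h0 h1 h2 h3).elim
      | exact (k123 h0 h1 h2 h3).elim
      | exact (k230 h0 h1 h2 h3).elim
      | exact (k301 h0 h1 h2 h3).elim
      | exact (h1 (c01.resolve_left h0)).elim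
      | exact (h2 (c12.resolve_left h1)).elim
      | exact (h3 (c23.resolve_left h2)).elim
      | exact (h0 (c30.resolve_left h3)).elim
    rcases pat with ⟨h0,h1,h2,h3⟩|⟨h0,h1,h2,h3⟩|⟨h0,h1,h2,h3⟩
    · refine Or.inl ⟨hyv, fun i => ?_⟩
      fin_cases i
      · simpa using h0
      · simpa using h1
      · simpa using h2
      · simpa using h3
    · refine Or.inr (Or.inl ⟨hyv, fun i => ?_⟩)
      fin_cases i
      · simpa using h0
      · simpa using h1
      · simpa using h2
      · simpa using h3
    · refine Or.inr (Or.inr ⟨hyv, fun i => ?_⟩)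
      fin_cases i
      · simpa using h0
      · simpa using h1
      · simpa using h2
      · simpa using h3
  -- A is complete to U
  have AU : ∀ ⦃y u⦄, y ∈ vSet G v ({0,2} : Set (Fin 4)) →
      u ∈ vSet G v (Set.univ : Set (Fin 4)) → G.Adj y u := by
    intro y u hy hu
    obtain ⟨y0, y2, y1n, _⟩ := hA hy
    have u0 := hU hu 0
    have u1 := hU hu 1
    have u2 := hU hu 2
    by_contra hyu
    have dyu : u ≠ y := fun h => y1n (h ▸ u1)
    exact noCoP2P3 hfree2 u0.symm y0.symm a01 u2.symm y2.symm a21 u1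
      n02 (fun h => hyu h.symm) y1n d02 dyu (hy.1 1)
  -- B is complete to U
  have BU : ∀ ⦃z u⦄, z ∈ vSet G v ({1,3} : Set (Fin 4)) →
      u ∈ vSet G v (Set.univ : Set (Fin 4)) → G.Adj z u := by
    intro z u hz hu
    obtain ⟨z1, z3, z0n, z2n⟩ := hB hz
    have u0 := hU hu 0
    have u1 := hU hu 1
    have u2 := hU hu 2
    have u3 := hU hu 3
    by_contra hzu
    have dzu : u ≠ z := fun h => z0n (h ▸ u0)
    exact noCoP2P3 hfree2 u1.symm z1.symm a12 u3.symm z3.symm a23.symm u2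
      n13 (fun h => hzu h.symm) z2n d13 dzu (hz.1 2)
  -- neighbours of x in U are pairwise adjacent
  have UU : ∀ ⦃u u'⦄, u ∈ vSet G v (Set.univ : Set (Fin 4)) →
      u' ∈ vSet G v (Set.univ : Set (Fin 4)) → G.Adj x u → G.Adj x u' → u ≠ u' →
      G.Adj u u' := by
    intro u u' hu hu' hxu hxu' duu
    by_contra huu
    exact noCoP2P3 hfree2 (hU hu 0) hxu.symm (hU hu 1) (hU hu' 0) hxu'.symm (hU hu' 1) a01
      huu (fun h => hxadj 0 h.symm) (hxadj 1) duu (hxv 0).symm (hxv 1)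
  -- no neighbour of x in A is nonadjacent to a neighbour of x in B
  have AB : ∀ ⦃y z⦄, y ∈ vSet G v ({0,2} : Set (Fin 4)) →
      z ∈ vSet G v ({1,3} : Set (Fin 4)) → G.Adj x y → G.Adj x z → ¬ G.Adj y z →
      False := by
    intro y z hy hz hxy hxz hyz
    obtain ⟨y0, y2, y1n, y3n⟩ := hA hy
    obtain ⟨z1, z3, z0n, z2n⟩ := hB hz
    exact noC5 hfree3 hxy y0 a03 z3.symm hxz.symm
      (hxadj 0) (hxadj 3) y3n hyz (fun h => z0n h.symm)
      (hxv 0) (hxv 3) (hy.1 3) (fun h => z0n (h ▸ y0)) (hz.1 0).symm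
  -- get a nonadjacent pair of neighbours of x
  obtain ⟨y, y', hxy, hxy', hyy', hnadj⟩ := exists_nonadj_pair hatom (hxv 0) (hxadj 0)
  rcases classify hxy with hyA | hyB | hyU
  · rcases classify hxy' with h'A | h'B | h'U
    · -- main case 1 : two neighbours in A
      obtain ⟨y0, y2, y1n, y3n⟩ := hA hyA
      obtain ⟨y'0, y'2, y'1n, y'3n⟩ := hA h'A
      constructor
      · left
        refine ⟨⟨y, hyA, y', h'A, hyy', hxy, hxy'⟩, ?_⟩
        intro z hz hxz
        obtain ⟨z1, z3, z0n, z2n⟩ := hB hz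
        by_cases hyz : G.Adj y z
        · by_cases hy'z : G.Adj y' z
          · exact noCoP2P3 hfree2 hxy.symm y0 hyz hxy'.symm y'0 hy'z hxz
              hnadj (hxadj 0) (fun h => z0n h.symm) hyy' (hxv 0) (hz.1 0).symm
          · exact AB h'A hz hxy' hxz hy'z
        · exact AB hyA hz hxy hxz hyz
      · intro w hw
        by_contra hxw
        have dwx : w ≠ x := fun h => hxadj 0 (h ▸ (hU hw 0))
        exact noCoP2P3 hfree2 (AU hyA hw) hxy.symm y0 (AU h'A hw) hxy'.symm y'0 (hU hw 0)
          hnadj (fun h => hxw h.symm) (hxadj 0) hyy' dwx (hxv 0)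
    · exact (AB hyA h'B hxy hxy' hnadj).elim
    · exact (hnadj (AU hyA h'U)).elim
  · rcases classify hxy' with h'A | h'B | h'U
    · exact (AB h'A hyB hxy' hxy (fun h => hnadj h.symm)).elim
    · -- main case 2 : two neighbours in B
      obtain ⟨y1, y3, y0n, y2n⟩ := hB hyB
      obtain ⟨y'1, y'3, y'0n, y'2n⟩ := hB h'B
      constructor
      · right
        refine ⟨⟨y, hyB, y', h'B, hyy', hxy, hxy'⟩, ?_⟩
        intro z hz hxz
        obtain ⟨z0, z2, z1n, z3n⟩ := hA hz
        by_cases hyz : G.Adj y z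
        · by_cases hy'z : G.Adj y' z
          · exact noCoP2P3 hfree2 hxy.symm y1 hyz hxy'.symm y'1 hy'z hxz
              hnadj (hxadj 1) (fun h => z1n h.symm) hyy' (hxv 1) (hz.1 1).symm
          · exact AB hz h'B hxz hxy' (fun h => hy'z h.symm)
        · exact AB hz hyB hxz hxy (fun h => hyz h.symm)
      · intro w hw
        by_contra hxw
        have dwx : w ≠ x := fun h => hxadj 0 (h ▸ (hU hw 0))
        exact noCoP2P3 hfree2 (BU hyB hw) hxy.symm y1 (BU h'B hw) hxy'.symm y'1 (hU hw 1)
          hnadj (fun h => hxw h.symm) (hxadj 1) hyy' dwx (hxv 1)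
    · exact (hnadj (BU hyB h'U)).elim
  · rcases classify hxy' with h'A | h'B | h'U
    · exact (hnadj (AU h'A hyU).symm).elim
    · exact (hnadj (BU h'B hyU).symm).elim
    · exact (hnadj (UU hyU h'U hxy hxy' hyy')).elim
end

section
/- Let G be a (2P_2, \overline{P_2+P_3})-free, C_5-free atom containing an induced 4-cycle on vertices v_1,…,v_4. Then for i ∈ {1,2}, the set V_{{i,i+1}} ∪ V_{{i+2,i+3}} contains at most two vertices. -/
open SimpleGraph

lemma no2P2_s15 {V : Type*} {G : SimpleGraph V} (h : _root_.Free twoP2 G) {x0 x1 x2 x3 : V}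
    (a01 : G.Adj x0 x1) (a23 : G.Adj x2 x3)
    (n02 : ¬G.Adj x0 x2) (n03 : ¬G.Adj x0 x3)
    (n12 : ¬G.Adj x1 x2) (n13 : ¬G.Adj x1 x3)
    (d02 : x0 ≠ x2) (d03 : x0 ≠ x3) (d12 : x1 ≠ x2) (d13 : x1 ≠ x3) : False := by
  have d01 : x0 ≠ x1 := a01.ne
  have d23 : x2 ≠ x3 := a23.ne
  have d10 := d01.symm; have d32 := d23.symm
  have d20 := d02.symm; have d30 := d03.symm
  have d21 := d12.symm; have d31 := d13.symm
  have a10 := a01.symm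
  have a32 := a23.symm
  have n20 : ¬G.Adj x2 x0 := fun h' => n02 h'.symm
  have n30 : ¬G.Adj x3 x0 := fun h' => n03 h'.symm
  have n21 : ¬G.Adj x2 x1 := fun h' => n12 h'.symm
  have n31 : ¬G.Adj x3 x1 := fun h' => n13 h'.symm
  apply h.false
  refine ⟨⟨![x0,x1,x2,x3], ?_⟩, ?_⟩
  · intro a b
    fin_cases a <;> fin_cases b <;> simp_all
  · intro a b
    show G.Adj (![x0,x1,x2,x3] a) (![x0,x1,x2,x3] b) ↔ _
    fin_cases a <;> fin_cases b <;>
      simp_all [twoP2, SimpleGraph.fromRel_adj]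

lemma noP2P3bar {V : Type*} {G : SimpleGraph V} (h : _root_.Free (P2P3ᶜ) G) {x0 x1 x2 x3 x4 : V}
    (n01 : ¬G.Adj x0 x1) (n23 : ¬G.Adj x2 x3) (n34 : ¬G.Adj x3 x4)
    (a02 : G.Adj x0 x2) (a03 : G.Adj x0 x3) (a04 : G.Adj x0 x4)
    (a12 : G.Adj x1 x2) (a13 : G.Adj x1 x3) (a14 : G.Adj x1 x4)
    (a24 : G.Adj x2 x4)
    (d01 : x0 ≠ x1) (d23 : x2 ≠ x3) (d34 : x3 ≠ x4) : False := by
  have d02 : x0 ≠ x2 := a02.ne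
  have d03 : x0 ≠ x3 := a03.ne
  have d04 : x0 ≠ x4 := a04.ne
  have d12 : x1 ≠ x2 := a12.ne
  have d13 : x1 ≠ x3 := a13.ne
  have d14 : x1 ≠ x4 := a14.ne
  have d24 : x2 ≠ x4 := a24.ne
  have d10 := d01.symm; have d32 := d23.symm; have d43 := d34.symm
  have d20 := d02.symm; have d30 := d03.symm; have d40 := d04.symm
  have d21 := d12.symm; have d31 := d13.symm; have d41 := d14.symm
  have d42 := d24.symm
  have a20 := a02.symm; have a30 := a03.symm; have a40 := a04.symm
  have a21 := a12.symm; have a31 := a13.symm; have a41 := a14.symm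
  have a42 := a24.symm
  have n10 : ¬G.Adj x1 x0 := fun h' => n01 h'.symm
  have n32 : ¬G.Adj x3 x2 := fun h' => n23 h'.symm
  have n43 : ¬G.Adj x4 x3 := fun h' => n34 h'.symm
  apply h.false
  refine ⟨⟨![x0,x1,x2,x3,x4], ?_⟩, ?_⟩
  · intro a b
    fin_cases a <;> fin_cases b <;> simp_all
  · intro a b
    show G.Adj (![x0,x1,x2,x3,x4] a) (![x0,x1,x2,x3,x4] b) ↔ _
    fin_cases a <;> fin_cases b <;>
      simp_all [P2P3, SimpleGraph.fromRel_adj, SimpleGraph.compl_adj]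

lemma noC5_s15 {V : Type*} {G : SimpleGraph V} (h : _root_.Free C5 G) {x0 x1 x2 x3 x4 : V}
    (a01 : G.Adj x0 x1) (a12 : G.Adj x1 x2) (a23 : G.Adj x2 x3)
    (a34 : G.Adj x3 x4) (a40 : G.Adj x4 x0)
    (n02 : ¬G.Adj x0 x2) (n03 : ¬G.Adj x0 x3) (n13 : ¬G.Adj x1 x3)
    (n14 : ¬G.Adj x1 x4) (n24 : ¬G.Adj x2 x4)
    (d02 : x0 ≠ x2) (d03 : x0 ≠ x3) (d13 : x1 ≠ x3) (d14 : x1 ≠ x4)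
    (d24 : x2 ≠ x4) : False := by
  have d01 : x0 ≠ x1 := a01.ne
  have d12 : x1 ≠ x2 := a12.ne
  have d23 : x2 ≠ x3 := a23.ne
  have d34 : x3 ≠ x4 := a34.ne
  have d40 : x4 ≠ x0 := a40.ne
  have d04 := d40.symm
  have d10 := d01.symm; have d21 := d12.symm; have d32 := d23.symm
  have d43 := d34.symm
  have d20 := d02.symm; have d30 := d03.symm; have d31 := d13.symm
  have d41 := d14.symm; have d42 := d24.symm
  have a10 := a01.symm; have a21 := a12.symm; have a32 := a23.symm
  have a43 := a34.symm; have a04 := a40.symm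
  have n20 : ¬G.Adj x2 x0 := fun h' => n02 h'.symm
  have n30 : ¬G.Adj x3 x0 := fun h' => n03 h'.symm
  have n31 : ¬G.Adj x3 x1 := fun h' => n13 h'.symm
  have n41 : ¬G.Adj x4 x1 := fun h' => n14 h'.symm
  have n42 : ¬G.Adj x4 x2 := fun h' => n24 h'.symm
  apply h.false
  refine ⟨⟨![x0,x1,x2,x3,x4], ?_⟩, ?_⟩
  · intro a b
    fin_cases a <;> fin_cases b <;> simp_all
  · intro a b
    show G.Adj (![x0,x1,x2,x3,x4] a) (![x0,x1,x2,x3,x4] b) ↔ _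
    fin_cases a <;> fin_cases b <;>
      simp_all [C5, SimpleGraph.fromRel_adj]

lemma key_s15 {V : Type*} (G : SimpleGraph V)
    (hfree1 : _root_.Free twoP2 G) (hfree2 : _root_.Free (P2P3ᶜ) G) (hfree3 : _root_.Free C5 G)
    (hatom : NoCliqueCutset G)
    (v : Fin 4 → V) (hv : Function.Injective v)
    (hC : ∀ i j : Fin 4, G.Adj (v i) (v j) ↔ (j = i + 1 ∨ i = j + 1)) :
    (vSet G v {0, 1}).Subsingleton := by
  intro a1 h1 a2 h2
  by_contra hne
  obtain ⟨a1ne, a1adj⟩ := h1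
  obtain ⟨a2ne, a2adj⟩ := h2
  -- cycle facts
  have c01 : G.Adj (v 0) (v 1) := (hC 0 1).mpr (by decide)
  have c12 : G.Adj (v 1) (v 2) := (hC 1 2).mpr (by decide)
  have c23 : G.Adj (v 2) (v 3) := (hC 2 3).mpr (by decide)
  have c30 : G.Adj (v 3) (v 0) := (hC 3 0).mpr (by decide)
  have cn02 : ¬G.Adj (v 0) (v 2) := fun h => by have := (hC 0 2).mp h; revert this; decide
  have cn13 : ¬G.Adj (v 1) (v 3) := fun h => by have := (hC 1 3).mp h; revert this; decide
  have cn20 : ¬G.Adj (v 2) (v 0) := fun h => cn02 h.symm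
  have cn31 : ¬G.Adj (v 3) (v 1) := fun h => cn13 h.symm
  -- membership facts
  have a1v0 : G.Adj a1 (v 0) := (a1adj 0).mpr (by simp)
  have a1v1 : G.Adj a1 (v 1) := (a1adj 1).mpr (by simp)
  have a1n2 : ¬G.Adj a1 (v 2) := fun h => by have := (a1adj 2).mp h; simp at this
  have a1n3 : ¬G.Adj a1 (v 3) := fun h => by have := (a1adj 3).mp h; simp at this
  have a2v0 : G.Adj a2 (v 0) := (a2adj 0).mpr (by simp)
  have a2v1 : G.Adj a2 (v 1) := (a2adj 1).mpr (by simp)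
  have a2n2 : ¬G.Adj a2 (v 2) := fun h => by have := (a2adj 2).mp h; simp at this
  have a2n3 : ¬G.Adj a2 (v 3) := fun h => by have := (a2adj 3).mp h; simp at this
  -- a1 not adjacent a2
  have nA : ¬G.Adj a1 a2 := fun hA =>
    no2P2_s15 hfree1 hA c23 a1n2 a1n3 a2n2 a2n3 (a1ne 2) (a1ne 3) (a2ne 2) (a2ne 3)
  -- typing lemma
  have htyp : ∀ u, G.Adj a1 u →
      u = v 0 ∨ u = v 1 ∨
        (G.Adj u (v 0) ∧ G.Adj u (v 1) ∧ (G.Adj u (v 2) ∨ G.Adj u (v 3))) := by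
    intro u hu
    by_cases hu0 : u = v 0
    · exact Or.inl hu0
    by_cases hu1 : u = v 1
    · exact Or.inr (Or.inl hu1)
    right; right
    have hun2 : u ≠ v 2 := fun h => a1n2 (h ▸ hu)
    have hun3 : u ≠ v 3 := fun h => a1n3 (h ▸ hu)
    have huna2 : u ≠ a2 := fun h => nA (h ▸ hu)
    have hu23 : G.Adj u (v 2) ∨ G.Adj u (v 3) := by
      by_contra hc
      push_neg at hc
      exact no2P2_s15 hfree1 hu c23 a1n2 a1n3 hc.1 hc.2 (a1ne 2) (a1ne 3) hun2 hun3
    have hR4 : G.Adj u (v 0) → G.Adj u (v 2) → G.Adj u (v 1) := by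
      intro huv0 huv2
      by_contra hcn
      exact noP2P3bar hfree2 hcn a1n2 cn20 hu.symm huv2 huv0 a1v1.symm c12
        c01.symm a1v0 hu1 (a1ne 2) (hv.ne (by decide))
    have hR5 : G.Adj u (v 1) → G.Adj u (v 3) → G.Adj u (v 0) := by
      intro huv1 huv3
      by_contra hcn
      exact noP2P3bar hfree2 hcn a1n3 cn31 hu.symm huv3 huv1 a1v0.symm c30.symm
        c01 a1v1 hu0 (a1ne 3) (hv.ne (by decide))
    by_cases hu2 : G.Adj u (v 2)
    · have h03 : G.Adj u (v 0) ∨ G.Adj u (v 3) := by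
        by_contra hc
        push_neg at hc
        exact noC5_s15 hfree3 hu hu2 c23 c30 a1v0.symm a1n2 a1n3 hc.2 hc.1 cn20
          (a1ne 2) (a1ne 3) hun3 hu0 (hv.ne (by decide))
      rcases h03 with h0' | h3'
      · exact ⟨h0', hR4 h0' hu2, Or.inl hu2⟩
      · have ha2or0 : G.Adj u a2 ∨ G.Adj u (v 0) := by
          by_contra hc
          push_neg at hc
          exact no2P2_s15 hfree1 a2v0 hu2 (fun h => hc.1 h.symm) a2n2
            (fun h => hc.2 h.symm) cn02 (Ne.symm huna2) (a2ne 2)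
            (Ne.symm hu0) (hv.ne (by decide))
        rcases ha2or0 with hua2 | hu0'
        · have h01 : G.Adj u (v 0) ∨ G.Adj u (v 1) := by
            by_contra hc
            push_neg at hc
            exact noP2P3bar hfree2 nA (fun h => hc.1 h.symm) hc.2 a1v0 hu a1v1
              a2v0 hua2.symm a2v1 c01 hne (Ne.symm hu0) hu1
          rcases h01 with hu0' | hu1'
          · exact ⟨hu0', hR4 hu0' hu2, Or.inl hu2⟩
          · exact ⟨hR5 hu1' h3', hu1', Or.inl hu2⟩
        · exact ⟨hu0', hR4 hu0' hu2, Or.inl hu2⟩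
    · have hu3 : G.Adj u (v 3) := hu23.resolve_left hu2
      have hu1' : G.Adj u (v 1) := by
        by_contra hc
        exact noC5_s15 hfree3 hu hu3 c23.symm c12.symm a1v1.symm a1n3 a1n2 hu2 hc
          cn31 (a1ne 3) (a1ne 2) hun2 hu1 (hv.ne (by decide))
      exact ⟨hR5 hu1' hu3, hu1', Or.inr hu3⟩
  -- N(a1) is a clique
  have hclique : G.IsClique (G.neighborSet a1) := by
    rw [SimpleGraph.isClique_iff]
    intro w hw w' hw' hneww'
    rw [SimpleGraph.mem_neighborSet] at hw hw'
    by_contra hnadj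
    rcases htyp w hw with rfl | rfl | ⟨w0, w1, w23⟩
    · rcases htyp w' hw' with rfl | rfl | ⟨w0', _, _⟩
      · exact hneww' rfl
      · exact hnadj c01
      · exact hnadj w0'.symm
    · rcases htyp w' hw' with rfl | rfl | ⟨_, w1', _⟩
      · exact hnadj c01.symm
      · exact hneww' rfl
      · exact hnadj w1'.symm
    · rcases htyp w' hw' with rfl | rfl | ⟨w0', w1', w23'⟩
      · exact hnadj w0
      · exact hnadj w1
      · have wn2 : w ≠ v 2 := fun h => a1n2 (h ▸ hw)
        have wn3 : w ≠ v 3 := fun h => a1n3 (h ▸ hw)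
        have w'n2 : w' ≠ v 2 := fun h => a1n2 (h ▸ hw')
        have w'n3 : w' ≠ v 3 := fun h => a1n3 (h ▸ hw')
        have case22 : G.Adj w (v 2) → G.Adj w' (v 2) → False := fun h2 h2' =>
          noP2P3bar hfree2 hnadj a1n2 cn20 hw.symm h2 w0 hw'.symm h2' w0' a1v0
            hneww' (a1ne 2) (hv.ne (by decide))
        have case33 : G.Adj w (v 3) → G.Adj w' (v 3) → False := fun h3 h3' =>
          noP2P3bar hfree2 hnadj a1n3 cn31 hw.symm h3 w1 hw'.symm h3' w1' a1v1
            hneww' (a1ne 3) (hv.ne (by decide))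
        rcases w23 with h2 | h3 <;> rcases w23' with h2' | h3'
        · exact case22 h2 h2'
        · by_cases hx : G.Adj w (v 3)
          · exact case33 hx h3'
          by_cases hy : G.Adj w' (v 2)
          · exact case22 h2 hy
          exact noC5_s15 hfree3 hw h2 c23 h3'.symm hw'.symm a1n2 a1n3 hx hnadj
            (fun h => hy h.symm) (a1ne 2) (a1ne 3) wn3 hneww' (Ne.symm w'n2)
        · by_cases hx : G.Adj w' (v 3)
          · exact case33 h3 hx
          by_cases hy : G.Adj w (v 2)
          · exact case22 hy h2'
          exact noC5_s15 hfree3 hw' h2' c23 h3.symm hw.symm a1n2 a1n3 hx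
            (fun h => hnadj h.symm) (fun h => hy h.symm) (a1ne 2) (a1ne 3)
            w'n3 (Ne.symm hneww') (Ne.symm wn2)
        · exact case33 h3 h3'
  -- clique cutset contradiction
  have hm1 : a1 ∈ (G.neighborSet a1)ᶜ := by simp
  have hm2 : a2 ∈ (G.neighborSet a1)ᶜ := by
    simp only [Set.mem_compl_iff, SimpleGraph.mem_neighborSet]
    exact nA
  obtain ⟨p⟩ := hatom (G.neighborSet a1) hclique ⟨a1, hm1⟩ ⟨a2, hm2⟩
  have walkfalse : ∀ (y : ((G.neighborSet a1)ᶜ : Set V))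
      (_ : (G.induce ((G.neighborSet a1)ᶜ : Set V)).Walk ⟨a1, hm1⟩ y),
      y.val = a2 → False := by
    intro y q
    cases q with
    | nil => intro h; exact hne h
    | @cons _ z _ h q =>
      intro _
      have hz : G.Adj a1 z.val := by simpa using h
      exact z.2 hz
  exact walkfalse _ p rfl

theorem clm_C4_V12_V34_small {V : Type*} [Fintype V] (G : SimpleGraph V)
    (hfree1 : _root_.Free twoP2 G) (hfree2 : _root_.Free (P2P3ᶜ) G) (hfree3 : _root_.Free C5 G)
    (hatom : NoCliqueCutset G)
    (v : Fin 4 → V) (hv : Function.Injective v)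
    (hC : ∀ i j : Fin 4, G.Adj (v i) (v j) ↔ (j = i + 1 ∨ i = j + 1)) :
    ∀ i : Fin 4,
      (vSet G v {i, i + 1} ∪ vSet G v {i + 2, i + 3}).ncard ≤ 2 := by
  have hsub : ∀ i0 : Fin 4, (vSet G v {i0, i0 + 1}).Subsingleton := by
    intro i0
    have hv' : Function.Injective (fun j : Fin 4 => v (j + i0)) := by
      intro a b h
      exact add_left_injective i0 (hv h)
    have hC' : ∀ j k : Fin 4,
        G.Adj (v (j + i0)) (v (k + i0)) ↔ (k = j + 1 ∨ j = k + 1) := by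
      intro j k
      rw [hC, show j + i0 + 1 = (j + 1) + i0 from add_right_comm j i0 1,
        show k + i0 + 1 = (k + 1) + i0 from add_right_comm k i0 1,
        add_left_inj, add_left_inj]
    have hkey := key_s15 G hfree1 hfree2 hfree3 hatom (fun j => v (j + i0)) hv' hC'
    have hset : vSet G v {i0, i0 + 1} = vSet G (fun j => v (j + i0)) {0, 1} := by
      ext x
      simp only [vSet, Set.mem_setOf_eq, Set.mem_insert_iff, Set.mem_singleton_iff]
      constructor
      · rintro ⟨hx1, hx2⟩
        refine ⟨fun j => hx1 (j + i0), fun j => ?_⟩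
        rw [hx2 (j + i0)]
        constructor
        · rintro (h | h)
          · left
            have : j + i0 = 0 + i0 := by rwa [zero_add]
            exact add_left_injective i0 this
          · right
            have : j + i0 = 1 + i0 := by rwa [add_comm 1 i0]
            exact add_left_injective i0 this
        · rintro (rfl | rfl)
          · left; exact zero_add i0
          · right; exact add_comm 1 i0
      · rintro ⟨hx1, hx2⟩
        refine ⟨fun j => ?_, fun j => ?_⟩
        · have := hx1 (j - i0)
          rwa [sub_add_cancel] at this
        · have := hx2 (j - i0)
          rw [sub_add_cancel] at this
          rw [this]
          constructor
          · rintro (h | h)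
            · left; exact sub_eq_zero.mp h
            · right
              have := sub_eq_iff_eq_add.mp h
              rwa [add_comm 1 i0] at this
          · rintro (rfl | rfl)
            · left; exact sub_self _
            · right; exact add_sub_cancel_left _ _
    rw [hset]
    exact hkey
  intro i
  have h1 : (vSet G v {i, i + 1}).ncard ≤ 1 := by
    rcases (hsub i).eq_empty_or_singleton with h | ⟨x, h⟩ <;> simp [h]
  have h2 : (vSet G v {i + 2, i + 3}).ncard ≤ 1 := by
    have := hsub (i + 2)
    have h3 : i + 2 + 1 = i + 3 := by
      rw [add_assoc]
      rfl
    rw [h3] at this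
    rcases this.eq_empty_or_singleton with h | ⟨x, h⟩ <;> simp [h]
  calc (vSet G v {i, i + 1} ∪ vSet G v {i + 2, i + 3}).ncard
      ≤ (vSet G v {i, i + 1}).ncard + (vSet G v {i + 2, i + 3}).ncard :=
        Set.ncard_union_le _ _
    _ ≤ 2 := by omega
end
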